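/- For every maxmin copula C and all x,y ∈ [0,1] one has |C(x,y) − C(y,x)| ≤ 4/27, and this bound is sharp over the class of maxmin copulas. Moreover, for every (x,y) ∈ [0,1]² with x ≤ y, the supremum of the set {|C(x,y) − C(y,x)| : C a maxmin copula} equals max{F(x,y), F(1−y, 1−x)}, where F(u,v) = u(1−v) if u ≤ v² and F(u,v) = u(v−u)/v if u > v² (for 0 ≤ u ≤ v ≤ 1); explicitly, this supremum equals (x/y)(y−x) if max{1−y, y²} ≤ x ≤ y, equals ((1−y)/(1−x))(y−x) if x ≤ y ≤ min{2x−x², 1−x}, and equals x(1−y) otherwise. For x ≥ y the supremum equals the value at (y,x). -/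

import Mathlib

/-- The class `𝓕` of generators: `f : [0,1] → [0,1]`, `f(0) = f(1) = 0`,
`x ↦ f(x) + x` nondecreasing on `[0,1]`, and `x ↦ f(x)/x` nonincreasing on `(0,1]`. -/
def MemF (f : ℝ → ℝ) : Prop :=
  (∀ x ∈ Set.Icc (0:ℝ) 1, f x ∈ Set.Icc (0:ℝ) 1) ∧
  f 0 = 0 ∧ f 1 = 0 ∧
  MonotoneOn (fun x => f x + x) (Set.Icc 0 1) ∧
  AntitoneOn (fun x => f x / x) (Set.Ioc 0 1)

/-- A maxmin copula: `C(x,y) = min{x, xy + f(x)g(1−y)}` on `[0,1]²` with `f, g ∈ 𝓕`. -/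
def IsMaxminCopula (C : ℝ → ℝ → ℝ) : Prop :=
  ∃ f g : ℝ → ℝ, MemF f ∧ MemF g ∧
    ∀ x ∈ Set.Icc (0:ℝ) 1, ∀ y ∈ Set.Icc (0:ℝ) 1,
      C x y = min x (x * y + f x * g (1 - y))

/-- The bound function `F` for Marshall copulas: `F(u,v) = u(1−v)` if `u ≤ v²`,
and `F(u,v) = u(v−u)/v` otherwise (on `0 ≤ u ≤ v ≤ 1`). -/
noncomputable def Fbound (u v : ℝ) : ℝ :=
  if u ≤ v ^ 2 then u * (1 - v) else u * (v - u) / v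

/-- The maximal asymmetry function of the family of maxmin copulas (for `x ≤ y`). -/
noncomputable def dstarMaxmin (x y : ℝ) : ℝ :=
  if max (1 - y) (y ^ 2) ≤ x then x / y * (y - x)
  else if y ≤ min (2 * x - x ^ 2) (1 - x) then (1 - y) / (1 - x) * (y - x)
  else x * (1 - y)

set_option maxHeartbeats 1000000

lemma memF_aux (l m : ℝ) (hl : 0 ≤ l) (hm : m ≤ 1) :
    MemF (fun t => max 0 (min (l*t) (m - t))) := by
  have key : ∀ u : ℝ, max 0 (min (l*u) (m-u)) + u = max u (min (l*u+u) m) := by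
    intro u
    rw [← max_add_add_right, ← min_add_add_right, zero_add, sub_add_cancel]
  refine ⟨?_, ?_, ?_, ?_, ?_⟩
  · intro t ht
    refine ⟨le_max_left _ _, max_le (by norm_num) ((min_le_right _ _).trans (by linarith [ht.1]))⟩
  · have : min (l*0) (m-0) ≤ 0 := (min_le_left _ _).trans (by norm_num)
    simpa using max_eq_left this
  · have : min (l*1) (m-1) ≤ 0 := (min_le_right _ _).trans (by linarith)
    simpa using max_eq_left this
  · intro s _ t _ hst
    simp only
    rw [key s, key t]
    exact max_le_max hst (min_le_min (by nlinarith [mul_nonneg hl (sub_nonneg.2 hst)]) le_rfl)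
  · intro s hs t ht hst
    simp only
    rw [div_le_div_iff₀ ht.1 hs.1]
    rcases le_or_gt (min (l*t) (m-t)) 0 with h|h
    · rw [max_eq_left h, zero_mul]
      exact mul_nonneg (le_max_left 0 _) ht.1.le
    · have hmt : 0 < m - t := lt_of_lt_of_le h (min_le_right _ _)
      have hm0 : 0 < m := by linarith [ht.1]
      have hms : 0 < m - s := by linarith
      rw [max_eq_right h.le, max_eq_right (le_min (mul_nonneg hl hs.1.le) hms.le)]
      rw [min_mul_of_nonneg _ _ hs.1.le, min_mul_of_nonneg _ _ ht.1.le]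
      refine min_le_min (le_of_eq (by ring)) ?_
      nlinarith [mul_nonneg hm0.le (sub_nonneg.2 hst)]

lemma memF_facts (f : ℝ → ℝ) (hf : MemF f) {x y : ℝ} (hx : 0 ≤ x) (hxy : x ≤ y) (hy : y ≤ 1) :
    0 ≤ f x ∧ f x ≤ 1 - x ∧ 0 ≤ f y ∧ f y ≤ 1 - y ∧ f x + x ≤ f y + y ∧ f y * x ≤ f x * y := by
  obtain ⟨hrange, h0, h1, hmono, hanti⟩ := hf
  have hxI : x ∈ Set.Icc (0:ℝ) 1 := ⟨hx, hxy.trans hy⟩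
  have hyI : y ∈ Set.Icc (0:ℝ) 1 := ⟨hx.trans hxy, hy⟩
  have h1I : (1:ℝ) ∈ Set.Icc (0:ℝ) 1 := ⟨zero_le_one, le_rfl⟩
  have hfx0 : 0 ≤ f x := (hrange x hxI).1
  have hfy0 : 0 ≤ f y := (hrange y hyI).1
  have hfx1 : f x ≤ 1 - x := by have := hmono hxI h1I hxI.2; simp only [h1] at this; linarith
  have hfy1 : f y ≤ 1 - y := by have := hmono hyI h1I hyI.2; simp only [h1] at this; linarith
  refine ⟨hfx0, hfx1, hfy0, hfy1, hmono hxI hyI hxy, ?_⟩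
  rcases eq_or_lt_of_le hx with h|h
  · simp only [← h, h0, mul_zero, zero_mul, le_refl]
  · have hy0 : 0 < y := lt_of_lt_of_le h hxy
    have := hanti ⟨h, hxI.2⟩ ⟨hy0, hy⟩ hxy
    simp only at this
    exact (div_le_div_iff₀ hy0 h).mp this

lemma pos1 (x y a b c d : ℝ) (hx0 : 0 ≤ x) (hxy : x ≤ y) (hy1 : y ≤ 1)
    (ha0 : 0 ≤ a) (ha1 : a ≤ 1 - x) (hb0 : 0 ≤ b) (hd0 : 0 ≤ d)
    (hab : a + x ≤ b + y) (hc0 : 0 ≤ c) (hc1 : c ≤ y) (hcd : c + (1-y) ≤ d + (1-x))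
    (h1a : 1 - y ≤ x) (h1b : y^2 ≤ x) :
    (min (x*(1-y)) (a*c) - b*d) * y ≤ x*(y-x) := by
  have hy0 : (0:ℝ) < y := by linarith
  have hs0 : (0:ℝ) ≤ y - x := by linarith
  rcases le_total a (y-x) with hA|hA
  · have hac : a*c ≤ (y-x)*y := mul_le_mul hA hc1 hc0 hs0
    have h3 : min (x*(1-y)) (a*c) ≤ a*c := min_le_right _ _
    have h4 : a*c*y ≤ (y-x)*y*y := by nlinarith [mul_le_mul_of_nonneg_right hac hy0.le]
    have h5 : (y-x)*y*y ≤ (y-x)*x := by nlinarith [mul_le_mul_of_nonneg_left h1b hs0]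
    nlinarith [mul_nonneg hb0 hd0, mul_le_mul_of_nonneg_right h3 hy0.le]
  · rcases le_total c (y-x) with hC|hC
    · have hax : a ≤ y := by linarith
      have hac : a*c ≤ y*(y-x) := mul_le_mul hax hC hc0 hy0.le
      have h3 : min (x*(1-y)) (a*c) ≤ a*c := min_le_right _ _
      have h4 : a*c*y ≤ y*(y-x)*y := by nlinarith [mul_le_mul_of_nonneg_right hac hy0.le]
      have h5 : y*(y-x)*y ≤ (y-x)*x := by nlinarith [mul_le_mul_of_nonneg_left h1b hs0]
      nlinarith [mul_nonneg hb0 hd0, mul_le_mul_of_nonneg_right h3 hy0.le]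
    · have hb' : a - (y-x) ≤ b := by linarith
      have hd' : c - (y-x) ≤ d := by linarith
      have hbd : (a-(y-x))*(c-(y-x)) ≤ b*d :=
        mul_le_mul hb' hd' (by linarith) hb0
      have hyc : 0 ≤ (y - a)*(y - c) := mul_nonneg (by linarith) (by linarith)
      rcases le_total (a*c) (x*(1-y)) with hm|hm
      · rw [min_eq_right hm]
        nlinarith [mul_nonneg hy0.le (sub_nonneg.2 hbd), mul_nonneg hs0 hyc,
          mul_nonneg hs0 (sub_nonneg.2 hm)]
      · rw [min_eq_left hm]
        nlinarith [mul_nonneg hy0.le (sub_nonneg.2 hbd), mul_nonneg hs0 hyc,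
          mul_nonneg hx0 (sub_nonneg.2 hm)]

lemma negside (x y a b c d : ℝ) (hx0 : 0 ≤ x) (hxy : x ≤ y) (hy1 : y ≤ 1)
    (ha0 : 0 ≤ a) (hb0 : 0 ≤ b) (hc0 : 0 ≤ c) (hd0 : 0 ≤ d)
    (hb1 : b ≤ 1 - y) (hd1 : d ≤ x) (hba : b*x ≤ a*y) (hdc : d*(1-y) ≤ c*(1-x)) :
    (b*d - min (x*(1-y)) (a*c)) * (y*(1-x)) ≤ x*(1-y)*(y-x) := by
  have hbd : b*d ≤ x*(1-y) := by nlinarith [mul_le_mul hb1 hd1 hd0 (by linarith : (0:ℝ) ≤ 1-y)]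
  rcases le_total (a*c) (x*(1-y)) with hm|hm
  · rw [min_eq_right hm]
    have h1 : (b*x)*(d*(1-y)) ≤ (a*y)*(c*(1-x)) :=
      mul_le_mul hba hdc (mul_nonneg hd0 (by linarith)) (mul_nonneg ha0 (by linarith))
    nlinarith [h1, mul_le_mul_of_nonneg_right hbd (by linarith : (0:ℝ) ≤ y-x)]
  · rw [min_eq_left hm]
    have t1 : (b*d - x*(1-y)) * (y*(1-x)) ≤ 0 :=
      mul_nonpos_of_nonpos_of_nonneg (by linarith) (mul_nonneg (by linarith) (by linarith))
    have t2 : 0 ≤ x*(1-y)*(y-x) :=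
      mul_nonneg (mul_nonneg hx0 (by linarith)) (by linarith)
    linarith

lemma ub_core (x y a b c d : ℝ) (hx0 : 0 ≤ x) (hxy : x ≤ y) (hy1 : y ≤ 1)
    (ha0 : 0 ≤ a) (ha1 : a ≤ 1 - x) (hb0 : 0 ≤ b) (hb1 : b ≤ 1 - y)
    (hab : a + x ≤ b + y) (hba : b * x ≤ a * y)
    (hc0 : 0 ≤ c) (hc1 : c ≤ y) (hd0 : 0 ≤ d) (hd1 : d ≤ x)
    (hcd : c + (1 - y) ≤ d + (1 - x)) (hdc : d * (1 - y) ≤ c * (1 - x)) :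
    |min (x*(1-y)) (a*c) - b*d| ≤ dstarMaxmin x y := by
  have hneg := negside x y a b c d hx0 hxy hy1 ha0 hb0 hc0 hd0 hb1 hd1 hba hdc
  rw [abs_sub_le_iff, dstarMaxmin]
  split_ifs with h1 h2
  · -- branch 1
    have h1a : 1 - y ≤ x := le_trans (le_max_left _ _) h1
    have h1b : y^2 ≤ x := le_trans (le_max_right _ _) h1
    have hy0 : (0:ℝ) < y := by linarith
    constructor
    · rw [div_mul_eq_mul_div, le_div_iff₀ hy0]
      exact pos1 x y a b c d hx0 hxy hy1 ha0 ha1 hb0 hd0 hab hc0 hc1 hcd h1a h1b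
    · rw [div_mul_eq_mul_div, le_div_iff₀ hy0]
      rcases le_or_gt 1 x with hx1|hx1
      · have hxeq : x = 1 := le_antisymm (hxy.trans hy1) hx1
        have hyeq : y = 1 := le_antisymm hy1 (hxeq ▸ hxy)
        have hb' : b = 0 := le_antisymm (by rw [hyeq] at hb1; linarith) hb0
        have hmin : 0 ≤ min (x*(1-y)) (a*c) :=
          le_min (mul_nonneg hx0 (by linarith)) (mul_nonneg ha0 hc0)
        rw [hxeq, hyeq] at hmin ⊢
        rw [hb']
        nlinarith [hmin]
      · have h5 : ((b*d - min (x*(1-y)) (a*c))*y)*(1-x) ≤ (x*(y-x))*(1-x) := by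
          nlinarith [hneg, mul_nonneg (mul_nonneg hx0 (by linarith : (0:ℝ) ≤ y-x))
            (by linarith : (0:ℝ) ≤ y-x)]
        exact le_of_mul_le_mul_right h5 (by linarith)
  · -- branch 2
    have h2a : y ≤ 2*x - x^2 := le_trans h2 (min_le_left _ _)
    have h2b : y ≤ 1 - x := le_trans h2 (min_le_right _ _)
    have hx1 : (0:ℝ) < 1 - x := by nlinarith
    constructor
    · rw [div_mul_eq_mul_div, le_div_iff₀ hx1]
      have hp := pos1 (1-y) (1-x) c d a b (by linarith) (by linarith) (by linarith)
        hc0 (by linarith) hd0 hb0 (by linarith) ha0 (by linarith) (by linarith)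
        (by linarith) (by nlinarith)
      rw [show (1-y)*(1-(1-x)) = x*(1-y) by ring, show c*a = a*c by ring,
        show d*b = b*d by ring] at hp
      nlinarith [hp]
    · rw [div_mul_eq_mul_div, le_div_iff₀ hx1]
      rcases le_or_gt y 0 with hy0|hy0
      · have hyeq : y = 0 := le_antisymm hy0 (hx0.trans hxy)
        have hxeq : x = 0 := le_antisymm (hyeq ▸ hxy) hx0
        have hd' : d = 0 := le_antisymm (hxeq ▸ hd1) hd0
        have hmin : 0 ≤ min (x*(1-y)) (a*c) :=
          le_min (mul_nonneg hx0 (by linarith)) (mul_nonneg ha0 hc0)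
        rw [hxeq, hyeq] at hmin ⊢
        rw [hd']
        nlinarith [hmin]
      · have h5 : ((b*d - min (x*(1-y)) (a*c))*(1-x))*y ≤ ((1-y)*(y-x))*y := by
          nlinarith [hneg, mul_nonneg (mul_nonneg (by linarith : (0:ℝ) ≤ 1-y)
            (by linarith : (0:ℝ) ≤ y-x)) (by linarith : (0:ℝ) ≤ y-x)]
        exact le_of_mul_le_mul_right h5 hy0
  · -- branch 3
    have hmin : 0 ≤ min (x*(1-y)) (a*c) :=
      le_min (mul_nonneg hx0 (by linarith)) (mul_nonneg ha0 hc0)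
    have hbd : b*d ≤ x*(1-y) := by
      nlinarith [mul_le_mul hb1 hd1 hd0 (by linarith : (0:ℝ) ≤ 1-y)]
    constructor
    · linarith [min_le_left (x*(1-y)) (a*c), mul_nonneg hb0 hd0]
    · linarith

lemma branch3_disj {x y : ℝ} (hxy : x ≤ y)
    (h1 : ¬ max (1 - y) (y ^ 2) ≤ x) (h2 : ¬ y ≤ min (2 * x - x ^ 2) (1 - x)) :
    x ≤ y^2 ∨ 1 - y ≤ (1-x)^2 := by
  rw [not_le, lt_max_iff] at h1
  rw [not_le, min_lt_iff] at h2
  rcases h1 with h1|h1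
  · rcases h2 with h2|h2
    · right; nlinarith
    · linarith
  · left; linarith

lemma dstar_nonneg {x y : ℝ} (hx0 : 0 ≤ x) (hxy : x ≤ y) (hy1 : y ≤ 1) :
    0 ≤ dstarMaxmin x y := by
  rw [dstarMaxmin]
  split_ifs with h1 h2
  · exact mul_nonneg (div_nonneg hx0 (hx0.trans hxy)) (by linarith)
  · exact mul_nonneg (div_nonneg (by linarith) (by linarith)) (by linarith)
  · exact mul_nonneg hx0 (by linarith)

lemma dstar_le_427 {x y : ℝ} (hx0 : 0 ≤ x) (hxy : x ≤ y) (hy1 : y ≤ 1) :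
    dstarMaxmin x y ≤ 4/27 := by
  rw [dstarMaxmin]
  split_ifs with h1 h2
  · have h1a : 1 - y ≤ x := le_trans (le_max_left _ _) h1
    have h1b : y^2 ≤ x := le_trans (le_max_right _ _) h1
    have hy0 : (0:ℝ) < y := by linarith
    rw [div_mul_eq_mul_div, div_le_iff₀ hy0]
    nlinarith [mul_nonneg (sub_nonneg.2 h1b) (by nlinarith [sq_nonneg (1-y)] : (0:ℝ) ≤ x - (y - y^2)),
      mul_nonneg hy0.le (mul_nonneg (sq_nonneg (y - 2/3)) (by linarith : (0:ℝ) ≤ y + 1/3))]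
  · have h2a : y ≤ 2*x - x^2 := le_trans h2 (min_le_left _ _)
    have h2b : y ≤ 1 - x := le_trans h2 (min_le_right _ _)
    have hx1 : (0:ℝ) < 1 - x := by nlinarith
    rw [div_mul_eq_mul_div, div_le_iff₀ hx1]
    nlinarith [mul_nonneg (by nlinarith : (0:ℝ) ≤ (1-y) - (1-x)^2)
        (by nlinarith : (0:ℝ) ≤ (1-y) - ((1-x) - (1-x)^2)),
      mul_nonneg hx1.le (mul_nonneg (sq_nonneg ((1-x) - 2/3)) (by linarith : (0:ℝ) ≤ (1-x) + 1/3))]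
  · rcases branch3_disj hxy h1 h2 with h|h
    · nlinarith [mul_nonneg (sub_nonneg.2 h) (by linarith : (0:ℝ) ≤ 1 - y),
        mul_nonneg (sq_nonneg (y - 2/3)) (by linarith : (0:ℝ) ≤ y + 1/3)]
    · nlinarith [mul_nonneg hx0 (by nlinarith : (0:ℝ) ≤ (1-x)^2 - (1-y)),
        mul_nonneg (by linarith : (0:ℝ) ≤ 4/3 - x) (sq_nonneg (x - 1/3))]

lemma dstar_zero {x y : ℝ} (hx0 : 0 ≤ x) (hxy : x ≤ y) (hy1 : y ≤ 1)
    (h : x = y ∨ x = 0 ∨ y = 1) : dstarMaxmin x y = 0 := by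
  rw [dstarMaxmin]
  rcases h with h|h|h
  · subst h
    split_ifs with h1 h2
    · ring
    · ring
    · exfalso
      rw [not_le, lt_max_iff] at h1
      rw [not_le, min_lt_iff] at h2
      rcases h1 with h1|h1
      · rcases h2 with h2|h2 <;> nlinarith
      · nlinarith
  · subst h
    split_ifs with h1 h2
    · exfalso
      have := le_trans (le_max_left _ _) h1
      have := le_trans (le_max_right _ _) h1
      nlinarith
    · have : y = 0 := le_antisymm (by simpa using le_trans h2 (min_le_left _ _)) hxy
      rw [this]; ring
    · ring
  · subst h
    split_ifs with h1 h2
    · have hx1 : x = 1 := le_antisymm hxy (by simpa using le_trans (le_max_right _ _) h1)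
      rw [hx1]; ring
    · have : x = 0 := le_antisymm (by linarith [le_trans h2 (min_le_right _ _)]) hx0
      rw [this]; ring
    · ring

lemma dstar_eq_F {x y : ℝ} (hx0 : 0 ≤ x) (hxy : x ≤ y) (hy1 : y ≤ 1) :
    dstarMaxmin x y = max (Fbound x y) (Fbound (1 - y) (1 - x)) := by
  rw [dstarMaxmin, Fbound, Fbound]
  by_cases h1 : max (1 - y) (y ^ 2) ≤ x
  · have h1a : 1 - y ≤ x := le_trans (le_max_left _ _) h1
    have h1b : y^2 ≤ x := le_trans (le_max_right _ _) h1
    have hy0 : (0:ℝ) < y := by linarith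
    have hy0' : y ≠ 0 := ne_of_gt hy0
    rw [if_pos h1]
    by_cases hf1 : x ≤ y^2
    · have hxe : x = y^2 := le_antisymm hf1 h1b
      rw [if_pos hf1]
      by_cases hf2 : 1 - y ≤ (1-x)^2
      · rw [if_pos hf2, show (1-y)*(1-(1-x)) = x*(1-y) by ring, max_self, hxe]
        field_simp
      · rw [if_neg hf2]
        push_neg at hf2
        have hx1 : x < 1 := by nlinarith [sq_nonneg (1-x)]
        have hkey : y*(1-y) ≤ x*(1-x) := by
          nlinarith [mul_nonneg (sub_nonneg.2 hxy) (show (0:ℝ) ≤ x+y-1 by linarith)]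
        have h5 : y - x ≤ x*(1-x) := by rw [hxe]; nlinarith [hkey]
        have hmax : (1-y)*((1-x)-(1-y))/(1-x) ≤ x*(1-y) := by
          rw [div_le_iff₀ (by linarith)]
          nlinarith [mul_nonneg (show (0:ℝ) ≤ 1-y by linarith) (sub_nonneg.2 h5)]
        rw [max_eq_left hmax, hxe]
        field_simp
    · rw [if_neg hf1]
      push_neg at hf1
      by_cases hf2 : 1 - y ≤ (1-x)^2
      · exfalso
        nlinarith [mul_nonneg (sub_nonneg.2 hxy) (show (0:ℝ) ≤ x+y-1 by linarith)]
      · rw [if_neg hf2]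
        push_neg at hf2
        have hx1 : x < 1 := by nlinarith [sq_nonneg (1-x)]
        have hkey : y*(1-y) ≤ x*(1-x) := by
          nlinarith [mul_nonneg (sub_nonneg.2 hxy) (show (0:ℝ) ≤ x+y-1 by linarith)]
        have hmax : (1-y)*((1-x)-(1-y))/(1-x) ≤ x*(y-x)/y := by
          rw [div_le_div_iff₀ (by linarith) hy0]
          nlinarith [mul_nonneg (sub_nonneg.2 hxy) (sub_nonneg.2 hkey)]
        rw [max_eq_left hmax, div_mul_eq_mul_div]
  · rw [if_neg h1]
    by_cases h2 : y ≤ min (2 * x - x ^ 2) (1 - x)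
    · rw [if_pos h2]
      have h2a : y ≤ 2*x - x^2 := le_trans h2 (min_le_left _ _)
      have h2b : y ≤ 1 - x := le_trans h2 (min_le_right _ _)
      have hx1 : (0:ℝ) < 1 - x := by nlinarith
      by_cases hf2 : 1 - y ≤ (1-x)^2
      · have hye : 1 - y = (1-x)^2 := le_antisymm hf2 (by nlinarith)
        have hyx : y - x = x*(1-x) := by nlinarith [hye]
        rw [if_pos hf2]
        have e2 : (1-y)/(1-x)*(y-x) = (1-y)*(1-(1-x)) := by
          rw [hyx]; field_simp; ring
        by_cases hf1 : x ≤ y^2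
        · rw [if_pos hf1, max_eq_right (le_of_eq (by ring : x*(1-y) = (1-y)*(1-(1-x))))]
          exact e2
        · rw [if_neg hf1]
          push_neg at hf1
          have hy0 : (0:ℝ) < y := by nlinarith [sq_nonneg y]
          have hmax : x*(y-x)/y ≤ (1-y)*(1-(1-x)) := by
            rw [div_le_iff₀ hy0]
            have hkey : x*(1-x) ≤ y*(1-y) := by
              nlinarith [mul_nonneg (sub_nonneg.2 hxy) (show (0:ℝ) ≤ 1-x-y by linarith)]
            nlinarith [mul_nonneg hx0 (sub_nonneg.2 hkey), hyx]
          rw [max_eq_right hmax]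
          exact e2
      · rw [if_neg hf2]
        have e2 : (1-y)/(1-x)*(y-x) = (1-y)*((1-x)-(1-y))/(1-x) := by
          rw [show (1-x)-(1-y) = y-x by ring, div_mul_eq_mul_div]
        by_cases hf1 : x ≤ y^2
        · rw [if_pos hf1]
          have hmax : x*(1-y) ≤ (1-y)*((1-x)-(1-y))/(1-x) := by
            rw [le_div_iff₀ hx1]
            nlinarith [mul_nonneg (show (0:ℝ) ≤ 1-y by linarith)
              (show (0:ℝ) ≤ (y-x) - x*(1-x) by nlinarith)]
          rw [max_eq_right hmax]
          exact e2
        · rw [if_neg hf1]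
          push_neg at hf1
          have hy0 : (0:ℝ) < y := by nlinarith [sq_nonneg y]
          have hmax : x*(y-x)/y ≤ (1-y)*((1-x)-(1-y))/(1-x) := by
            rw [div_le_div_iff₀ hy0 hx1]
            have hkey : x*(1-x) ≤ y*(1-y) := by
              nlinarith [mul_nonneg (sub_nonneg.2 hxy) (show (0:ℝ) ≤ 1-x-y by linarith)]
            nlinarith [mul_nonneg (sub_nonneg.2 hxy) (sub_nonneg.2 hkey)]
          rw [max_eq_right hmax]
          exact e2
    · rw [if_neg h2]
      have hdisj := branch3_disj hxy h1 h2
      by_cases hf1 : x ≤ y^2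
      · rw [if_pos hf1]
        by_cases hf2 : 1 - y ≤ (1-x)^2
        · rw [if_pos hf2, show (1-y)*(1-(1-x)) = x*(1-y) by ring, max_self]
        · rw [if_neg hf2]
          push_neg at hf2
          have hx1 : x < 1 := by nlinarith [sq_nonneg (1-x)]
          have hmax : (1-y)*((1-x)-(1-y))/(1-x) ≤ x*(1-y) := by
            rw [div_le_iff₀ (by linarith)]
            nlinarith [mul_nonneg (show (0:ℝ) ≤ 1-y by linarith)
              (show (0:ℝ) ≤ x*(1-x)-(y-x) by nlinarith)]
          rw [max_eq_left hmax]
      · rw [if_neg hf1]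
        push_neg at hf1
        have hf2 : 1-y ≤ (1-x)^2 := by
          rcases hdisj with h|h
          · linarith
          · exact h
        rw [if_pos hf2]
        have hy0 : (0:ℝ) < y := by nlinarith [sq_nonneg y]
        have hmax : x*(y-x)/y ≤ (1-y)*(1-(1-x)) := by
          rw [div_le_iff₀ hy0]
          nlinarith [mul_nonneg hx0 (show (0:ℝ) ≤ y*(1-y)-(y-x) by nlinarith)]
        rw [max_eq_right hmax]
        ring

lemma ub_main (C : ℝ → ℝ → ℝ) (hC : IsMaxminCopula C) {x y : ℝ}
    (hx : x ∈ Set.Icc (0:ℝ) 1) (hy : y ∈ Set.Icc (0:ℝ) 1) (hxy : x ≤ y) :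
    |C x y - C y x| ≤ dstarMaxmin x y := by
  obtain ⟨f, g, hf, hg, hCeq⟩ := hC
  have hCxy := hCeq x hx y hy
  have hCyx := hCeq y hy x hx
  obtain ⟨ha0, ha1, hb0, hb1, hab, hba⟩ := memF_facts f hf hx.1 hxy hy.2
  obtain ⟨hc0', hc1', hd0', hd1', hcd', hdc'⟩ :=
    memF_facts g hg (by linarith [hy.2] : (0:ℝ) ≤ 1 - y)
      (by linarith : 1 - y ≤ 1 - x) (by linarith [hx.1] : 1 - x ≤ 1)
  set a := f x with ha
  set b := f y with hb
  set c := g (1-y) with hc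
  set d := g (1-x) with hd
  have hc1 : c ≤ y := by linarith
  have hd1 : d ≤ x := by linarith
  have hbd : b * d ≤ x * (1-y) := by nlinarith [mul_le_mul hb1 hd1 hd0' (by linarith [hy.2] : (0:ℝ) ≤ 1-y)]
  have hCyx' : C y x = x*y + b*d := by
    rw [hCyx, min_eq_right (by nlinarith)]
    ring
  have hCxy' : C x y = x*y + min (x*(1-y)) (a*c) := by
    rcases le_total (a*c) (x*(1-y)) with h|h
    · rw [hCxy, min_eq_right (by nlinarith), min_eq_right h]
    · rw [hCxy, min_eq_left (by nlinarith), min_eq_left h]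
      ring
  have : C x y - C y x = min (x*(1-y)) (a*c) - b*d := by
    rw [hCxy', hCyx']; ring
  rw [this]
  exact ub_core x y a b c d hx.1 hxy hy.2 ha0 ha1 hb0 hb1 hab hba hc0' hc1 hd0' hd1
    (by linarith) hdc'

lemma pw_eval_lo (l m t : ℝ) (h0 : 0 ≤ l*t) (h1 : l*t ≤ m - t) :
    max 0 (min (l*t) (m - t)) = l*t := by rw [min_eq_left h1, max_eq_right h0]

lemma pw_eval_hi (l m t : ℝ) (h0 : 0 ≤ m - t) (h1 : m - t ≤ l*t) :
    max 0 (min (l*t) (m - t)) = m - t := by rw [min_eq_right h1, max_eq_right h0]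

lemma pw_eval_zero (l m t : ℝ) (h : m - t ≤ 0) :
    max 0 (min (l*t) (m - t)) = 0 := max_eq_left ((min_le_right _ _).trans h)

lemma memF_zero : MemF (fun _ => (0:ℝ)) := by
  refine ⟨fun t _ => ⟨le_rfl, zero_le_one⟩, rfl, rfl, ?_, ?_⟩
  · intro s _ t _ hst; simpa using hst
  · intro s _ t _ _; simp

lemma achieve (x y : ℝ) (hx0 : 0 ≤ x) (hxy : x ≤ y) (hy1 : y ≤ 1) :
    ∃ C : ℝ → ℝ → ℝ, IsMaxminCopula C ∧ |C x y - C y x| = dstarMaxmin x y := by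
  by_cases hdeg : x = y ∨ x = 0 ∨ y = 1
  · refine ⟨fun u v => min u (u*v + (fun _ : ℝ => (0:ℝ)) u * (fun _ : ℝ => (0:ℝ)) (1-v)),
      ⟨_, _, memF_zero, memF_zero, fun _ _ _ _ => rfl⟩, ?_⟩
    simp only
    rw [dstar_zero hx0 hxy hy1 hdeg]
    rw [min_eq_right (by nlinarith : x*y + 0*0 ≤ x), min_eq_right (by nlinarith : y*x + 0*0 ≤ y)]
    simp [mul_comm]
  · push_neg at hdeg
    obtain ⟨hne, hxne, hyne⟩ := hdeg
    have hxy' : x < y := lt_of_le_of_ne hxy hne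
    have hx0' : 0 < x ∨ x = 0 := hx0.lt_or_eq.imp id Eq.symm
    have hx0'' : 0 < x := lt_of_le_of_ne hx0 (Ne.symm hxne)
    have hy1'' : y < 1 := lt_of_le_of_ne hy1 hyne
    have hy0 : (0:ℝ) < y := lt_of_le_of_lt hx0 hxy'
    have h1y : (0:ℝ) < 1 - y := by linarith
    have h1x : (0:ℝ) < 1 - x := by linarith
    by_cases h1 : max (1 - y) (y ^ 2) ≤ x
    · -- branch 1
      have h1a : 1 - y ≤ x := le_trans (le_max_left _ _) h1
      have h1b : y^2 ≤ x := le_trans (le_max_right _ _) h1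
      refine ⟨fun u v => min u (u*v +
          (fun t => max 0 (min ((1-y)/y*t) (x/y - t))) u *
          (fun t => max 0 (min (y/(1-y)*t) (1 - t))) (1-v)),
        ⟨_, _, memF_aux _ _ (div_nonneg h1y.le hy0.le) (by rw [div_le_one hy0]; exact hxy),
          memF_aux _ _ (div_nonneg hy0.le h1y.le) le_rfl, fun _ _ _ _ => rfl⟩, ?_⟩
      simp only
      rw [pw_eval_hi _ _ _ (by rw [sub_nonneg, le_div_iff₀ hy0]; nlinarith)
          (le_of_eq (by field_simp) : x/y - x ≤ (1-y)/y*x)]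
      rw [pw_eval_hi _ _ _
          (by rw [sub_nonneg, le_div_iff₀ hy0]; nlinarith : (0:ℝ) ≤ x/y - y)
          (by rw [show (1-y)/y*y = 1-y by field_simp, sub_le_iff_le_add,
                div_le_iff₀ hy0]; nlinarith : x/y - y ≤ (1-y)/y*y)]
      rw [pw_eval_hi _ _ (1-y) (by linarith)
          (le_of_eq (by field_simp; ring) : 1 - (1-y) ≤ y/(1-y)*(1-y))]
      rw [pw_eval_hi _ _ (1-x) (by linarith)
          (by rw [div_mul_eq_mul_div, le_div_iff₀ h1y]; nlinarith : 1 - (1-x) ≤ y/(1-y)*(1-x))]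
      rw [show x*y + (x/y - x)*(1 - (1-y)) = x by field_simp; ring, min_self]
      rw [show y*x + (x/y - y)*(1 - (1-x)) = x^2/y by field_simp; ring]
      rw [min_eq_right (by rw [div_le_iff₀ hy0]; nlinarith : x^2/y ≤ y)]
      rw [dstarMaxmin, if_pos h1]
      rw [abs_of_nonneg (by rw [sub_nonneg, div_le_iff₀ hy0]; nlinarith : (0:ℝ) ≤ x - x^2/y)]
      field_simp
    · by_cases h2 : y ≤ min (2 * x - x ^ 2) (1 - x)
      · -- branch 2
        have h2a : y ≤ 2*x - x^2 := le_trans h2 (min_le_left _ _)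
        have h2b : y ≤ 1 - x := le_trans h2 (min_le_right _ _)
        refine ⟨fun u v => min u (u*v +
            (fun t => max 0 (min ((1-x)/x*t) (1 - t))) u *
            (fun t => max 0 (min (x/(1-x)*t) ((1-y)/(1-x) - t))) (1-v)),
          ⟨_, _, memF_aux _ _ (div_nonneg h1x.le hx0''.le) le_rfl,
            memF_aux _ _ (div_nonneg hx0''.le h1x.le)
              (by rw [div_le_one h1x]; linarith), fun _ _ _ _ => rfl⟩, ?_⟩
        simp only
        rw [pw_eval_hi _ _ x (by linarith) (le_of_eq (by field_simp) : 1 - x ≤ (1-x)/x*x)]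
        rw [pw_eval_hi _ _ y (by linarith)
            (by rw [div_mul_eq_mul_div, le_div_iff₀ hx0'']; nlinarith : 1 - y ≤ (1-x)/x*y)]
        rw [pw_eval_hi _ _ (1-y)
            (by rw [sub_nonneg, le_div_iff₀ h1x]; nlinarith : (0:ℝ) ≤ (1-y)/(1-x) - (1-y))
            (le_of_eq (by field_simp; ring) : (1-y)/(1-x) - (1-y) ≤ x/(1-x)*(1-y))]
        rw [pw_eval_hi _ _ (1-x)
            (by rw [sub_nonneg, le_div_iff₀ h1x]; nlinarith : (0:ℝ) ≤ (1-y)/(1-x) - (1-x))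
            (by rw [show x/(1-x)*(1-x) = x by field_simp, sub_le_iff_le_add,
                div_le_iff₀ h1x]; nlinarith : (1-y)/(1-x) - (1-x) ≤ x/(1-x)*(1-x))]
        rw [show x*y + (1-x)*((1-y)/(1-x) - (1-y)) = x by field_simp; ring, min_self]
        have hnn : 0 ≤ (1-y)/(1-x)*(y-x) :=
          mul_nonneg (div_nonneg h1y.le h1x.le) (by linarith)
        rw [show y*x + (1-y)*((1-y)/(1-x) - (1-x)) = x - (1-y)/(1-x)*(y-x) by
            field_simp; ring]
        rw [min_eq_right (by linarith : x - (1-y)/(1-x)*(y-x) ≤ y)]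
        rw [dstarMaxmin, if_neg h1, if_pos h2]
        rw [show x - (x - (1-y)/(1-x)*(y-x)) = (1-y)/(1-x)*(y-x) by ring,
          abs_of_nonneg hnn]
      · -- branch 3
        rcases branch3_disj hxy h1 h2 with hsub|hsub
        · refine ⟨fun u v => min u (u*v +
              (fun t => max 0 (min ((1-y)/y*t) (x/y - t))) u *
              (fun t => max 0 (min (y/(1-y)*t) (1 - t))) (1-v)),
            ⟨_, _, memF_aux _ _ (div_nonneg h1y.le hy0.le) (by rw [div_le_one hy0]; exact hxy),
              memF_aux _ _ (div_nonneg hy0.le h1y.le) le_rfl, fun _ _ _ _ => rfl⟩, ?_⟩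
          simp only
          rw [pw_eval_hi _ _ _ (by rw [sub_nonneg, le_div_iff₀ hy0]; nlinarith)
              (le_of_eq (by field_simp) : x/y - x ≤ (1-y)/y*x)]
          rw [pw_eval_zero _ _ y (by rw [sub_nonpos, div_le_iff₀ hy0]; nlinarith)]
          rw [pw_eval_hi _ _ (1-y) (by linarith)
              (le_of_eq (by field_simp; ring) : 1 - (1-y) ≤ y/(1-y)*(1-y))]
          rw [pw_eval_hi _ _ (1-x) (by linarith)
              (by rw [div_mul_eq_mul_div, le_div_iff₀ h1y]; nlinarith : 1 - (1-x) ≤ y/(1-y)*(1-x))]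
          rw [show x*y + (x/y - x)*(1 - (1-y)) = x by field_simp; ring, min_self]
          rw [zero_mul, add_zero, min_eq_right (by nlinarith : y*x ≤ y)]
          rw [dstarMaxmin, if_neg h1, if_neg h2]
          rw [abs_of_nonneg (by nlinarith : (0:ℝ) ≤ x - y*x)]
          ring
        · refine ⟨fun u v => min u (u*v +
              (fun t => max 0 (min ((1-x)/x*t) (1 - t))) u *
              (fun t => max 0 (min (x/(1-x)*t) ((1-y)/(1-x) - t))) (1-v)),
            ⟨_, _, memF_aux _ _ (div_nonneg h1x.le hx0''.le) le_rfl,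
              memF_aux _ _ (div_nonneg hx0''.le h1x.le)
                (by rw [div_le_one h1x]; linarith), fun _ _ _ _ => rfl⟩, ?_⟩
          simp only
          rw [pw_eval_hi _ _ x (by linarith) (le_of_eq (by field_simp) : 1 - x ≤ (1-x)/x*x)]
          rw [pw_eval_hi _ _ y (by linarith)
              (by rw [div_mul_eq_mul_div, le_div_iff₀ hx0'']; nlinarith : 1 - y ≤ (1-x)/x*y)]
          rw [pw_eval_hi _ _ (1-y)
              (by rw [sub_nonneg, le_div_iff₀ h1x]; nlinarith : (0:ℝ) ≤ (1-y)/(1-x) - (1-y))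
              (le_of_eq (by field_simp; ring) : (1-y)/(1-x) - (1-y) ≤ x/(1-x)*(1-y))]
          rw [pw_eval_zero _ _ (1-x) (by rw [sub_nonpos, div_le_iff₀ h1x]; nlinarith)]
          rw [show x*y + (1-x)*((1-y)/(1-x) - (1-y)) = x by field_simp; ring, min_self]
          rw [mul_zero, add_zero, min_eq_right (by nlinarith : y*x ≤ y)]
          rw [dstarMaxmin, if_neg h1, if_neg h2]
          rw [abs_of_nonneg (by nlinarith : (0:ℝ) ≤ x - y*x)]
          ring

/-- Theorem 5.7: every maxmin copula satisfies `|C(x,y) − C(y,x)| ≤ 4/27`,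
the bound is sharp, and for `x ≤ y` in `[0,1]` the maximal asymmetry function of the
family of maxmin copulas equals `max{F(x,y), F(1−y,1−x)}`, given explicitly by
`dstarMaxmin`; for `x ≥ y` the supremum equals the value at `(y,x)`. -/
theorem maxmin_maximal_asymmetry :
    (∀ C : ℝ → ℝ → ℝ, IsMaxminCopula C →
      ∀ x ∈ Set.Icc (0:ℝ) 1, ∀ y ∈ Set.Icc (0:ℝ) 1, |C x y - C y x| ≤ 4 / 27) ∧
    (∃ C : ℝ → ℝ → ℝ, IsMaxminCopula C ∧
      ∃ x ∈ Set.Icc (0:ℝ) 1, ∃ y ∈ Set.Icc (0:ℝ) 1, |C x y - C y x| = 4 / 27) ∧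
    (∀ x ∈ Set.Icc (0:ℝ) 1, ∀ y ∈ Set.Icc (0:ℝ) 1, x ≤ y →
      IsLUB {d : ℝ | ∃ C : ℝ → ℝ → ℝ, IsMaxminCopula C ∧ d = |C x y - C y x|}
        (dstarMaxmin x y) ∧
      dstarMaxmin x y = max (Fbound x y) (Fbound (1 - y) (1 - x))) ∧
    (∀ x ∈ Set.Icc (0:ℝ) 1, ∀ y ∈ Set.Icc (0:ℝ) 1, y ≤ x →
      IsLUB {d : ℝ | ∃ C : ℝ → ℝ → ℝ, IsMaxminCopula C ∧ d = |C x y - C y x|}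
        (dstarMaxmin y x)) := by
  have lub : ∀ x y : ℝ, x ∈ Set.Icc (0:ℝ) 1 → y ∈ Set.Icc (0:ℝ) 1 → x ≤ y →
      IsLUB {d : ℝ | ∃ C : ℝ → ℝ → ℝ, IsMaxminCopula C ∧ d = |C x y - C y x|}
        (dstarMaxmin x y) := by
    intro x y hx hy hxy
    obtain ⟨C, hC, hD⟩ := achieve x y hx.1 hxy hy.2
    have hmem : dstarMaxmin x y ∈
        {d : ℝ | ∃ C : ℝ → ℝ → ℝ, IsMaxminCopula C ∧ d = |C x y - C y x|} :=
      ⟨C, hC, hD.symm⟩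
    constructor
    · rintro d ⟨C', hC', rfl⟩
      exact ub_main C' hC' hx hy hxy
    · intro b hb
      exact hb hmem
  refine ⟨?_, ?_, ?_, ?_⟩
  · intro C hC x hx y hy
    rcases le_total x y with h|h
    · exact (ub_main C hC hx hy h).trans (dstar_le_427 hx.1 h hy.2)
    · rw [abs_sub_comm]
      exact (ub_main C hC hy hx h).trans (dstar_le_427 hy.1 h hx.2)
  · obtain ⟨C, hC, hD⟩ := achieve (4/9) (2/3) (by norm_num) (by norm_num) (by norm_num)
    refine ⟨C, hC, 4/9, by norm_num, 2/3, by norm_num, ?_⟩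
    rw [hD, dstarMaxmin, if_pos (by norm_num [max_le_iff])]
    norm_num
  · intro x hx y hy hxy
    exact ⟨lub x y hx hy hxy, dstar_eq_F hx.1 hxy hy.2⟩
  · intro x hx y hy hyx
    have hset : {d : ℝ | ∃ C : ℝ → ℝ → ℝ, IsMaxminCopula C ∧ d = |C x y - C y x|}
        = {d : ℝ | ∃ C : ℝ → ℝ → ℝ, IsMaxminCopula C ∧ d = |C y x - C x y|} := by
      ext d
      constructor
      · rintro ⟨C, hC, rfl⟩; exact ⟨C, hC, abs_sub_comm _ _⟩
      · rintro ⟨C, hC, rfl⟩; exact ⟨C, hC, abs_sub_comm _ _⟩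
    rw [hset]
    exact lub y x hy hx hyx
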